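/- arXiv:1709.03773 — 2 statements merged into one kernel-verified Lean document; each statement's English description precedes it below -/
import Mathlib

section
/- Let α = cos z dx + sin z dy on ℝ³ and let X(x,y,z) = (Y₁(x,y), Y₂(x,y), m(x,y,z)) be a smooth contact vector field for α, i.e. there is a smooth μ : ℝ³ → ℝ with L_X α = μ·α pointwise. Set a(x,y,z) = cos(z)·Y₁(x,y) + sin(z)·Y₂(x,y) = α(X), let β = cos z dx + sin z dy − a dt on ℝ⁴ (coordinates (x,y,z,t)), and let W : ℝ⁴ → ℝ⁴ be the vector field W(x,y,z,t) = (Y₁(x,y), Y₂(x,y), m(x,y,z), 1), i.e. W = ∂_t + X. Then: (i) β(W) = 0 at every point; and (ii) for every smooth vector field Z : ℝ⁴ → ℝ⁴ satisfying β(Z) = 0 at every point, the Lie bracket [W,Z](p) = DZ_p(W(p)) − DW_p(Z(p)) also satisfies β([W,Z]) = 0 at every point. Hence the line field spanned by W = ∂_t + X is the kernel (characteristic foliation) of the even-contact structure ker β: it lies in ker β and satisfies [W, Γ(ker β)] ⊆ Γ(ker β). -/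
/-- The 1-form `α = cos z dx + sin z dy` on `ℝ³`. -/
noncomputable def alphaForm (p : Fin 3 → ℝ) : (Fin 3 → ℝ) →L[ℝ] ℝ :=
  Real.cos (p 2) • ContinuousLinearMap.proj 0 + Real.sin (p 2) • ContinuousLinearMap.proj 1

/-- The exterior derivative `dα_p(u, v) = (Dα_p u)(v) − (Dα_p v)(u)`. -/
noncomputable def dAlphaForm (p u v : Fin 3 → ℝ) : ℝ :=
  fderiv ℝ alphaForm p u v - fderiv ℝ alphaForm p v u

/-- The contact vector field `X(x,y,z) = (Y₁(x,y), Y₂(x,y), m(x,y,z))` on `ℝ³`. -/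
noncomputable def contactVF (Y₁ Y₂ : (Fin 2 → ℝ) → ℝ) (m : (Fin 3 → ℝ) → ℝ)
    (q : Fin 3 → ℝ) : Fin 3 → ℝ :=
  ![Y₁ ![q 0, q 1], Y₂ ![q 0, q 1], m q]

/-- The function `a(x,y,z) = cos(z)·Y₁(x,y) + sin(z)·Y₂(x,y) = α(X)`. -/
noncomputable def aFun (Y₁ Y₂ : (Fin 2 → ℝ) → ℝ) (q : Fin 3 → ℝ) : ℝ :=
  Real.cos (q 2) * Y₁ ![q 0, q 1] + Real.sin (q 2) * Y₂ ![q 0, q 1]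

/-- The 1-form `β = cos z dx + sin z dy − a dt` on `ℝ⁴`. -/
noncomputable def betaForm (Y₁ Y₂ : (Fin 2 → ℝ) → ℝ) (p : Fin 4 → ℝ) :
    (Fin 4 → ℝ) →L[ℝ] ℝ :=
  Real.cos (p 2) • ContinuousLinearMap.proj 0 + Real.sin (p 2) • ContinuousLinearMap.proj 1
    - aFun Y₁ Y₂ ![p 0, p 1, p 2] • ContinuousLinearMap.proj 3

/-- The vector field `W = ∂_t + X`, i.e. `W(x,y,z,t) = (Y₁(x,y), Y₂(x,y), m(x,y,z), 1)`. -/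
noncomputable def Wvf (Y₁ Y₂ : (Fin 2 → ℝ) → ℝ) (m : (Fin 3 → ℝ) → ℝ)
    (q : Fin 4 → ℝ) : Fin 4 → ℝ :=
  ![Y₁ ![q 0, q 1], Y₂ ![q 0, q 1], m ![q 0, q 1, q 2], 1]

/-- The Lie bracket `[V,Z](p) = DZ_p(V(p)) − DV_p(Z(p))` of vector fields on `ℝ⁴`. -/
noncomputable def lieBracket4 (V Z : (Fin 4 → ℝ) → (Fin 4 → ℝ)) (p : Fin 4 → ℝ) :
    Fin 4 → ℝ :=
  fderiv ℝ Z p (V p) - fderiv ℝ V p (Z p)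

noncomputable def L23 : (Fin 3 → ℝ) →L[ℝ] (Fin 2 → ℝ) :=
  ContinuousLinearMap.pi ![ContinuousLinearMap.proj 0, ContinuousLinearMap.proj 1]

noncomputable def L24 : (Fin 4 → ℝ) →L[ℝ] (Fin 2 → ℝ) :=
  ContinuousLinearMap.pi ![ContinuousLinearMap.proj 0, ContinuousLinearMap.proj 1]

noncomputable def L34 : (Fin 4 → ℝ) →L[ℝ] (Fin 3 → ℝ) :=
  ContinuousLinearMap.pi ![ContinuousLinearMap.proj 0, ContinuousLinearMap.proj 1,
    ContinuousLinearMap.proj 2]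

@[simp] lemma L23_apply (q : Fin 3 → ℝ) : L23 q = ![q 0, q 1] := by
  ext i; fin_cases i <;> rfl

@[simp] lemma L24_apply (q : Fin 4 → ℝ) : L24 q = ![q 0, q 1] := by
  ext i; fin_cases i <;> rfl

@[simp] lemma L34_apply (q : Fin 4 → ℝ) : L34 q = ![q 0, q 1, q 2] := by
  ext i; fin_cases i <;> rfl

lemma hasFDerivAt_alphaForm (p : Fin 3 → ℝ) :
    HasFDerivAt alphaForm
      ((((-Real.sin (p 2)) • (ContinuousLinearMap.proj 2 : (Fin 3 → ℝ) →L[ℝ] ℝ)).smulRight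
          (ContinuousLinearMap.proj 0 : (Fin 3 → ℝ) →L[ℝ] ℝ))
        + (((Real.cos (p 2)) • (ContinuousLinearMap.proj 2 : (Fin 3 → ℝ) →L[ℝ] ℝ)).smulRight
          (ContinuousLinearMap.proj 1 : (Fin 3 → ℝ) →L[ℝ] ℝ))) p := by
  have h2 : HasFDerivAt (fun q : Fin 3 → ℝ => q 2)
      (ContinuousLinearMap.proj 2 : (Fin 3 → ℝ) →L[ℝ] ℝ) p := hasFDerivAt_apply 2 p
  exact (h2.cos.smul_const (ContinuousLinearMap.proj 0 : (Fin 3 → ℝ) →L[ℝ] ℝ)).add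
    (h2.sin.smul_const (ContinuousLinearMap.proj 1 : (Fin 3 → ℝ) →L[ℝ] ℝ))

lemma dAlphaForm_eq (p u v : Fin 3 → ℝ) :
    dAlphaForm p u v =
      (-Real.sin (p 2) * u 2) * v 0 + (Real.cos (p 2) * u 2) * v 1
        - ((-Real.sin (p 2) * v 2) * u 0 + (Real.cos (p 2) * v 2) * u 1) := by
  rw [dAlphaForm, (hasFDerivAt_alphaForm p).fderiv]
  simp [smul_eq_mul]

lemma alpha_contact (Y₁ Y₂ : (Fin 2 → ℝ) → ℝ) (m : (Fin 3 → ℝ) → ℝ) :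
    (fun q => alphaForm q (contactVF Y₁ Y₂ m q)) = aFun Y₁ Y₂ := by
  funext q
  simp [alphaForm, contactVF, aFun]

variable {Y₁ Y₂ : (Fin 2 → ℝ) → ℝ} {m : (Fin 3 → ℝ) → ℝ}

lemma hasFDerivAt_comp23 (hY₁ : ContDiff ℝ (⊤ : ℕ∞) Y₁) (p : Fin 3 → ℝ) :
    HasFDerivAt (fun q : Fin 3 → ℝ => Y₁ ![q 0, q 1])
      ((fderiv ℝ Y₁ ![p 0, p 1]).comp L23) p := by
  have h := (((hY₁.differentiable (by simp)) (L23 p)).hasFDerivAt).comp p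
    L23.hasFDerivAt
  simp only [L23_apply] at h
  rw [show (fun q : Fin 3 → ℝ => Y₁ ![q 0, q 1]) = Y₁ ∘ L23 from by
    funext q
    simp [Function.comp]]
  exact h

lemma hasFDerivAt_comp24 (hY₁ : ContDiff ℝ (⊤ : ℕ∞) Y₁) (p : Fin 4 → ℝ) :
    HasFDerivAt (fun q : Fin 4 → ℝ => Y₁ ![q 0, q 1])
      ((fderiv ℝ Y₁ ![p 0, p 1]).comp L24) p := by
  have h := (((hY₁.differentiable (by simp)) (L24 p)).hasFDerivAt).comp p
    L24.hasFDerivAt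
  simp only [L24_apply] at h
  rw [show (fun q : Fin 4 → ℝ => Y₁ ![q 0, q 1]) = Y₁ ∘ L24 from by
    funext q
    simp [Function.comp]]
  exact h

lemma hasFDerivAt_comp34 (hm : ContDiff ℝ (⊤ : ℕ∞) m) (p : Fin 4 → ℝ) :
    HasFDerivAt (fun q : Fin 4 → ℝ => m ![q 0, q 1, q 2])
      ((fderiv ℝ m ![p 0, p 1, p 2]).comp L34) p := by
  have h := (((hm.differentiable (by simp)) (L34 p)).hasFDerivAt).comp p
    L34.hasFDerivAt
  simp only [L34_apply] at h
  rw [show (fun q : Fin 4 → ℝ => m ![q 0, q 1, q 2]) = m ∘ L34 from by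
    funext q
    simp [Function.comp]]
  exact h

lemma hasFDerivAt_aFun (hY₁ : ContDiff ℝ (⊤ : ℕ∞) Y₁) (hY₂ : ContDiff ℝ (⊤ : ℕ∞) Y₂)
    (p : Fin 3 → ℝ) :
    HasFDerivAt (aFun Y₁ Y₂)
      ((Real.cos (p 2) • ((fderiv ℝ Y₁ ![p 0, p 1]).comp L23)
          + Y₁ ![p 0, p 1] • ((-Real.sin (p 2)) •
              (ContinuousLinearMap.proj 2 : (Fin 3 → ℝ) →L[ℝ] ℝ)))
        + (Real.sin (p 2) • ((fderiv ℝ Y₂ ![p 0, p 1]).comp L23)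
          + Y₂ ![p 0, p 1] • ((Real.cos (p 2)) •
              (ContinuousLinearMap.proj 2 : (Fin 3 → ℝ) →L[ℝ] ℝ)))) p := by
  have h2 : HasFDerivAt (fun q : Fin 3 → ℝ => q 2)
      (ContinuousLinearMap.proj 2 : (Fin 3 → ℝ) →L[ℝ] ℝ) p := hasFDerivAt_apply 2 p
  exact (h2.cos.mul (hasFDerivAt_comp23 hY₁ p)).add (h2.sin.mul (hasFDerivAt_comp23 hY₂ p))

lemma fderiv_aFun_apply (hY₁ : ContDiff ℝ (⊤ : ℕ∞) Y₁) (hY₂ : ContDiff ℝ (⊤ : ℕ∞) Y₂)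
    (p v : Fin 3 → ℝ) :
    fderiv ℝ (aFun Y₁ Y₂) p v =
      Real.cos (p 2) * fderiv ℝ Y₁ ![p 0, p 1] ![v 0, v 1]
        + Y₁ ![p 0, p 1] * (-Real.sin (p 2) * v 2)
        + (Real.sin (p 2) * fderiv ℝ Y₂ ![p 0, p 1] ![v 0, v 1]
        + Y₂ ![p 0, p 1] * (Real.cos (p 2) * v 2)) := by
  rw [(hasFDerivAt_aFun hY₁ hY₂ p).fderiv]
  simp [smul_eq_mul]

lemma hasFDerivAt_comp34a (hY₁ : ContDiff ℝ (⊤ : ℕ∞) Y₁) (hY₂ : ContDiff ℝ (⊤ : ℕ∞) Y₂)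
    (p : Fin 4 → ℝ) :
    HasFDerivAt (fun q : Fin 4 → ℝ => aFun Y₁ Y₂ ![q 0, q 1, q 2])
      ((fderiv ℝ (aFun Y₁ Y₂) ![p 0, p 1, p 2]).comp L34) p := by
  have hd : DifferentiableAt ℝ (aFun Y₁ Y₂) (L34 p) :=
    (hasFDerivAt_aFun hY₁ hY₂ (L34 p)).differentiableAt
  have h := (hd.hasFDerivAt).comp p L34.hasFDerivAt
  simp only [L34_apply] at h
  rw [show (fun q : Fin 4 → ℝ => aFun Y₁ Y₂ ![q 0, q 1, q 2]) = aFun Y₁ Y₂ ∘ L34 from by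
    funext q
    simp [Function.comp]]
  exact h

/-- If `X = (Y₁, Y₂, m)` is a smooth contact vector field for `α = cos z dx + sin z dy`
(`L_X α = μ·α`), `a = α(X)` and `β = cos z dx + sin z dy − a dt` on `ℝ⁴`, then the vector
field `W = ∂_t + X` satisfies `β(W) = 0` and, for every smooth vector field `Z` with
`β(Z) = 0` everywhere, also `β([W,Z]) = 0` everywhere: the line field spanned by `W` is the
kernel (characteristic foliation) of the even-contact structure `ker β`. -/
theorem kernel_of_even_contact
    (Y₁ Y₂ : (Fin 2 → ℝ) → ℝ) (m μ : (Fin 3 → ℝ) → ℝ)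
    (hY₁ : ContDiff ℝ (⊤ : ℕ∞) Y₁) (hY₂ : ContDiff ℝ (⊤ : ℕ∞) Y₂)
    (hm : ContDiff ℝ (⊤ : ℕ∞) m) (hμ : ContDiff ℝ (⊤ : ℕ∞) μ)
    (hcontact : ∀ p v : Fin 3 → ℝ,
      fderiv ℝ (fun q => alphaForm q (contactVF Y₁ Y₂ m q)) p v
        + dAlphaForm p (contactVF Y₁ Y₂ m p) v = μ p * alphaForm p v) :
    (∀ p : Fin 4 → ℝ, betaForm Y₁ Y₂ p (Wvf Y₁ Y₂ m p) = 0) ∧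
    (∀ Z : (Fin 4 → ℝ) → (Fin 4 → ℝ), ContDiff ℝ (⊤ : ℕ∞) Z →
      (∀ p : Fin 4 → ℝ, betaForm Y₁ Y₂ p (Z p) = 0) →
      ∀ p : Fin 4 → ℝ, betaForm Y₁ Y₂ p (lieBracket4 (Wvf Y₁ Y₂ m) Z p) = 0) := by
  constructor
  · intro p
    simp [betaForm, Wvf, aFun]
  · intro Z hZ hZ0 p
    -- derivative of Z
    have hZp : HasFDerivAt Z (fderiv ℝ Z p) p :=
      ((hZ.differentiable (by simp)) p).hasFDerivAt
    have hZc : ∀ i : Fin 4, HasFDerivAt (fun q => Z q i)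
        ((ContinuousLinearMap.proj i).comp (fderiv ℝ Z p)) p :=
      fun i => hasFDerivAt_pi'.mp hZp i
    -- derivative of W
    have hW : HasFDerivAt (Wvf Y₁ Y₂ m)
        (ContinuousLinearMap.pi
          ![(fderiv ℝ Y₁ ![p 0, p 1]).comp L24,
            (fderiv ℝ Y₂ ![p 0, p 1]).comp L24,
            (fderiv ℝ m ![p 0, p 1, p 2]).comp L34, 0]) p := by
      rw [hasFDerivAt_pi']
      intro i
      rw [ContinuousLinearMap.proj_pi]
      fin_cases i
      · simpa [Wvf] using hasFDerivAt_comp24 hY₁ p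
      · simpa [Wvf] using hasFDerivAt_comp24 hY₂ p
      · simpa [Wvf] using hasFDerivAt_comp34 hm p
      · simpa [Wvf] using hasFDerivAt_const (1 : ℝ) p
    -- derivative of β(Z) ≡ 0
    have h2 : HasFDerivAt (fun q : Fin 4 → ℝ => q 2)
        (ContinuousLinearMap.proj 2 : (Fin 4 → ℝ) →L[ℝ] ℝ) p := hasFDerivAt_apply 2 p
    have hg : HasFDerivAt
        (fun q : Fin 4 → ℝ => Real.cos (q 2) * Z q 0 + Real.sin (q 2) * Z q 1
          - aFun Y₁ Y₂ ![q 0, q 1, q 2] * Z q 3)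
        ((Real.cos (p 2) • ((ContinuousLinearMap.proj 0).comp (fderiv ℝ Z p))
            + Z p 0 • ((-Real.sin (p 2)) •
              (ContinuousLinearMap.proj 2 : (Fin 4 → ℝ) →L[ℝ] ℝ))
          + (Real.sin (p 2) • ((ContinuousLinearMap.proj 1).comp (fderiv ℝ Z p))
            + Z p 1 • ((Real.cos (p 2)) •
              (ContinuousLinearMap.proj 2 : (Fin 4 → ℝ) →L[ℝ] ℝ)))
          - (aFun Y₁ Y₂ ![p 0, p 1, p 2] • ((ContinuousLinearMap.proj 3).comp (fderiv ℝ Z p))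
            + Z p 3 • ((fderiv ℝ (aFun Y₁ Y₂) ![p 0, p 1, p 2]).comp L34)))) p :=
      ((h2.cos.mul (hZc 0)).add (h2.sin.mul (hZc 1))).sub
        ((hasFDerivAt_comp34a hY₁ hY₂ p).mul (hZc 3))
    have hfun : (fun q : Fin 4 → ℝ => Real.cos (q 2) * Z q 0 + Real.sin (q 2) * Z q 1
        - aFun Y₁ Y₂ ![q 0, q 1, q 2] * Z q 3) = (fun _ => (0 : ℝ)) :=
      funext fun q => by simpa [betaForm] using hZ0 q
    rw [hfun] at hg
    have hD0 := hg.unique (hasFDerivAt_const (0 : ℝ) p)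
    have E4 := congrArg (fun (T : (Fin 4 → ℝ) →L[ℝ] ℝ) => T (Wvf Y₁ Y₂ m p)) hD0
    simp only [ContinuousLinearMap.zero_apply] at E4
    -- contact condition instances
    have H1 := hcontact ![p 0, p 1, p 2] (contactVF Y₁ Y₂ m ![p 0, p 1, p 2])
    rw [alpha_contact] at H1
    simp only [dAlphaForm, sub_self, add_zero] at H1
    have H2 := hcontact ![p 0, p 1, p 2] ![Z p 0, Z p 1, Z p 2]
    rw [alpha_contact, dAlphaForm_eq] at H2
    have H3 := fderiv_aFun_apply hY₁ hY₂ ![p 0, p 1, p 2] ![Z p 0, Z p 1, Z p 2]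
    have H0 := hZ0 p
    have Hav : aFun Y₁ Y₂ ![p 0, p 1, p 2]
        = Real.cos (p 2) * Y₁ ![p 0, p 1] + Real.sin (p 2) * Y₂ ![p 0, p 1] := by
      simp [aFun]
    -- normalize everything
    rw [lieBracket4, hW.fderiv]
    simp only [betaForm, alphaForm, contactVF, Wvf, ContinuousLinearMap.add_apply,
      ContinuousLinearMap.sub_apply, ContinuousLinearMap.smul_apply,
      ContinuousLinearMap.comp_apply, ContinuousLinearMap.proj_apply,
      ContinuousLinearMap.pi_apply, ContinuousLinearMap.zero_apply, smul_eq_mul,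
      L23_apply, L24_apply, L34_apply, Matrix.cons_val_zero, Matrix.cons_val_one,
      Matrix.head_cons, Matrix.cons_val_two, Matrix.tail_cons, Matrix.cons_val_three,
      Pi.sub_apply] at E4 H0 H1 H2 H3 ⊢
    linear_combination E4 + H3 - H2 + Z p 3 * H1
      - μ ![p 0, p 1, p 2] * H0 - μ ![p 0, p 1, p 2] * Z p 3 * Hav
end

section
/- Let h : ℝ → ℝ be a smooth function with h(r) < 0 for r ∈ (1/2, 2/3) and h(r) = 0 for r ∉ (1/2, 2/3). Then there exists a smooth map V : [0,1] × ℝ × ℝ → ℝ², V = V(s,r,t) = (V₁, V₂), satisfying: (i) V(s,r,t+1) = V(s,r,t) for all (s,r,t) (periodicity in t); (ii) V(s,r,t) ≠ (0,0) for all (s,r,t); (iii) V(1,r,t) = (1,0) for all (r,t); (iv) V(s,r,t) = (1,0) whenever r ∉ (1/2, 2/3); (v) for all (s,r,t), V₁(s,r,t) − h(r)·V₂(s,r,t) ≠ 0 (transversality of the line field spanned by V to the line field spanned by (h(r),1)); (vi) for every s > 0 and all (r,t), V₁(s,r,t) > 0 (so the line field at time s is isotopic to the horizontal one); and (vii) V(0,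 7/12, t) = (0,1) for all t, while V₁(0,r,t) > 0 for every r ≠ 7/12 (so at time 0 the line field has a closed orbit at r = 7/12 bounding a Reeb component). -/
/-- Let `h : ℝ → ℝ` be smooth, negative exactly on `(1/2, 2/3)` and zero elsewhere. Then
there is a smooth family `V(s,r,t)` of vector fields on the annulus `S = [0,1] × S¹`
(1-periodic in `t`, parametrised by `s ∈ [0,1]`) realising the turbulisation homotopy of
line fields: nowhere vanishing, equal to the horizontal field `(1,0)` at `s = 1` and
outside `r ∈ (1/2, 2/3)`, everywhere transverse to the line field `L` spanned by
`(h(r), 1)`, isotopic to the horizontal field for `s > 0` (positive first component), and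
at `s = 0` possessing a closed orbit at `r = 7/12` bounding a Reeb component. -/
theorem turbulisation_line_field_homotopy
    (h : ℝ → ℝ) (hsm : ContDiff ℝ (⊤ : ℕ∞) h)
    (hneg : ∀ r ∈ Set.Ioo (1/2 : ℝ) (2/3), h r < 0)
    (hzero : ∀ r ∉ Set.Ioo (1/2 : ℝ) (2/3), h r = 0) :
    ∃ V : ℝ → ℝ → ℝ → ℝ × ℝ,
      ContDiff ℝ (⊤ : ℕ∞) (fun p : ℝ × ℝ × ℝ => V p.1 p.2.1 p.2.2) ∧
      -- (i) periodicity in t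
      (∀ s ∈ Set.Icc (0:ℝ) 1, ∀ r t : ℝ, V s r (t + 1) = V s r t) ∧
      -- (ii) nowhere vanishing
      (∀ s ∈ Set.Icc (0:ℝ) 1, ∀ r t : ℝ, V s r t ≠ (0, 0)) ∧
      -- (iii) at s = 1 the field is horizontal
      (∀ r t : ℝ, V 1 r t = (1, 0)) ∧
      -- (iv) horizontal outside the turbulisation region
      (∀ s ∈ Set.Icc (0:ℝ) 1, ∀ r ∉ Set.Ioo (1/2 : ℝ) (2/3), ∀ t : ℝ, V s r t = (1, 0)) ∧
      -- (v) transversality to the line field spanned by (h(r), 1)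
      (∀ s ∈ Set.Icc (0:ℝ) 1, ∀ r t : ℝ, (V s r t).1 - h r * (V s r t).2 ≠ 0) ∧
      -- (vi) for s > 0 the line field is isotopic to the horizontal one
      (∀ s ∈ Set.Ioc (0:ℝ) 1, ∀ r t : ℝ, 0 < (V s r t).1) ∧
      -- (vii) at s = 0: closed orbit at r = 7/12 bounding a Reeb component
      (∀ t : ℝ, V 0 (7/12) t = (0, 1)) ∧
      (∀ r : ℝ, r ≠ 7/12 → ∀ t : ℝ, 0 < (V 0 r t).1) := by
  classical
  set φ : ℝ → ℝ := fun r => Real.smoothTransition (1 - 144 * (r - 7/12)^2) with hφ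
  set ψ : ℝ → ℝ := fun s => 1 - Real.smoothTransition s with hψ
  have hφ_nonneg : ∀ r, 0 ≤ φ r := fun r => Real.smoothTransition.nonneg _
  have hφ_le_one : ∀ r, φ r ≤ 1 := fun r => Real.smoothTransition.le_one _
  have hφ_lt_one : ∀ r, r ≠ 7/12 → φ r < 1 := by
    intro r hr
    apply Real.smoothTransition.lt_one_of_lt_one
    have hne : r - 7/12 ≠ 0 := sub_ne_zero.2 hr
    have : (0:ℝ) < (r - 7/12)^2 := by positivity
    nlinarith
  have hφ_center : φ (7/12) = 1 := by
    simp only [hφ, sub_self]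
    norm_num [Real.smoothTransition.one]
  have hφ_zero : ∀ r, r ∉ Set.Ioo (1/2 : ℝ) (2/3) → φ r = 0 := by
    intro r hr
    apply Real.smoothTransition.zero_of_nonpos
    rw [Set.mem_Ioo, not_and_or, not_lt, not_lt] at hr
    rcases hr with hr | hr <;> nlinarith
  have hψ_nonneg : ∀ s, 0 ≤ ψ s := fun s => by
    simp only [hψ, sub_nonneg]; exact Real.smoothTransition.le_one _
  have hψ_le_one : ∀ s, s ∈ Set.Icc (0:ℝ) 1 → ψ s ≤ 1 := fun s _ => by
    simp only [hψ]
    have := Real.smoothTransition.nonneg s; linarith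
  have hψ_zero : ψ 0 = 1 := by simp [hψ, Real.smoothTransition.zero]
  have hψ_one : ψ 1 = 0 := by simp [hψ, Real.smoothTransition.one]
  have hψ_lt_one : ∀ s, 0 < s → ψ s < 1 := fun s hs => by
    simp only [hψ]
    have := Real.smoothTransition.pos_of_pos hs; linarith
  refine ⟨fun s r _t => (1 - ψ s * φ r, ψ s * φ r), ?_, ?_, ?_, ?_, ?_, ?_, ?_, ?_, ?_⟩
  · -- smoothness
    have hφs : ContDiff ℝ (⊤ : ℕ∞) φ := by
      apply Real.smoothTransition.contDiff.comp
      fun_prop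
    have hψs : ContDiff ℝ (⊤ : ℕ∞) ψ := by
      apply ContDiff.sub contDiff_const
      exact Real.smoothTransition.contDiff
    have hprod : ContDiff ℝ (⊤ : ℕ∞) (fun p : ℝ × ℝ × ℝ => ψ p.1 * φ p.2.1) := by
      apply ContDiff.mul
      · exact hψs.comp contDiff_fst
      · exact hφs.comp (contDiff_fst.comp contDiff_snd)
    exact (contDiff_const.sub hprod).prodMk hprod
  · intro s _ r t; rfl
  · intro s hs r t hbad
    have h1 : (1 : ℝ) - ψ s * φ r = 0 := congrArg Prod.fst hbad
    have h2 : ψ s * φ r = 0 := congrArg Prod.snd hbad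
    rw [h2] at h1; norm_num at h1
  · intro r t; simp [hψ_one]
  · intro s _ r hr t; simp [hφ_zero r hr]
  · intro s hs r t
    by_cases hr : r ∈ Set.Ioo (1/2 : ℝ) (2/3)
    · have hh := hneg r hr
      have ha0 : 0 ≤ ψ s * φ r := mul_nonneg (hψ_nonneg s) (hφ_nonneg r)
      have ha1 : ψ s * φ r ≤ 1 :=
        mul_le_one₀ (hψ_le_one s hs) (hφ_nonneg r) (hφ_le_one r)
      simp only
      rcases lt_or_eq_of_le ha1 with hlt | heq
      · nlinarith
      · nlinarith
    · simp only [hzero r hr, hφ_zero r hr]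
      norm_num
  · intro s hs r t
    have h1 : ψ s < 1 := hψ_lt_one s hs.1
    have h2 : ψ s * φ r ≤ ψ s * 1 :=
      mul_le_mul_of_nonneg_left (hφ_le_one r) (hψ_nonneg s)
    simp only; nlinarith
  · intro t; simp [hψ_zero, hφ_center]
  · intro r hr t
    have h1 : φ r < 1 := hφ_lt_one r hr
    simp only [hψ_zero, one_mul]
    linarith
end
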